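/- arXiv:1804.08851 — 2 statements merged into one kernel-verified Lean document; each statement's English description precedes it below -/
import Mathlib

section
/- Let n ≥ 3, x₀ ∈ ℝⁿ, R > 0, and define u(x) = (R/(R² - |x - x₀|²))^{(n-2)/2} for x in the open ball B_R(x₀). Then the conformal Hessian satisfies A^u(x) = -2 I for all x ∈ B_R(x₀). In particular, λ(-A^u) is identically equal to (2, 2, …, 2). -/
set_option maxHeartbeats 1000000

open Real Matrix Filter

noncomputable def pgrad (n : ℕ) (u : EuclideanSpace ℝ (Fin n) → ℝ)
    (x : EuclideanSpace ℝ (Fin n)) (i : Fin n) : ℝ :=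
  fderiv ℝ u x (EuclideanSpace.single i 1)

noncomputable def phess (n : ℕ) (u : EuclideanSpace ℝ (Fin n) → ℝ)
    (x : EuclideanSpace ℝ (Fin n)) (i j : Fin n) : ℝ :=
  fderiv ℝ (fun y => fderiv ℝ u y (EuclideanSpace.single j 1)) x (EuclideanSpace.single i 1)

/-- The conformal Hessian `A^u` of a positive function `u`. -/
noncomputable def confHess (n : ℕ) (u : EuclideanSpace ℝ (Fin n) → ℝ)
    (x : EuclideanSpace ℝ (Fin n)) : Matrix (Fin n) (Fin n) ℝ :=
  Matrix.of fun i j =>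
    -(2 / ((n : ℝ) - 2)) * (u x) ^ (-(((n : ℝ) + 2) / ((n : ℝ) - 2))) * phess n u x i j
    + (2 * (n : ℝ) / ((n : ℝ) - 2) ^ 2) * (u x) ^ (-(2 * (n : ℝ) / ((n : ℝ) - 2))) *
        pgrad n u x i * pgrad n u x j
    - (2 / ((n : ℝ) - 2) ^ 2) * (u x) ^ (-(2 * (n : ℝ) / ((n : ℝ) - 2))) *
        (∑ k, (pgrad n u x k) ^ 2) * (if i = j then (1 : ℝ) else 0)

section Aux

variable {n : ℕ}

lemma ball_pos {x₀ x : EuclideanSpace ℝ (Fin n)} {R : ℝ} (hR : 0 < R)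
    (hx : x ∈ Metric.ball x₀ R) : 0 < R ^ 2 - ‖x - x₀‖ ^ 2 := by
  have h : ‖x - x₀‖ < R := by
    simpa [dist_eq_norm] using hx
  nlinarith [norm_nonneg (x - x₀)]

lemma hasFDerivAt_g (x₀ x : EuclideanSpace ℝ (Fin n)) (R : ℝ) :
    HasFDerivAt (fun y : EuclideanSpace ℝ (Fin n) => R ^ 2 - ‖y - x₀‖ ^ 2)
      ((-2 : ℝ) • (innerSL ℝ (x - x₀))) x := by
  have h1 : HasFDerivAt (fun y : EuclideanSpace ℝ (Fin n) => y - x₀)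
      (ContinuousLinearMap.id ℝ _) x := (hasFDerivAt_id x).sub_const x₀
  have h2 := h1.norm_sq
  have h3 := (hasFDerivAt_const (R ^ 2) x).sub h2
  refine h3.congr_fderiv ?_
  ext v
  simp [two_smul, real_inner_comm]

lemma hasFDerivAt_u (x₀ : EuclideanSpace ℝ (Fin n)) {R : ℝ} (hR : 0 < R)
    {x : EuclideanSpace ℝ (Fin n)} (hx : x ∈ Metric.ball x₀ R) :
    HasFDerivAt (fun y => (R / (R ^ 2 - ‖y - x₀‖ ^ 2)) ^ (((n : ℝ) - 2) / 2))
      (((((n : ℝ) - 2) * R ^ (((n : ℝ) - 2) / 2)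
          * (R ^ 2 - ‖x - x₀‖ ^ 2) ^ (-(((n : ℝ) - 2) / 2) - 1))) • innerSL ℝ (x - x₀)) x := by
  set c : ℝ := ((n : ℝ) - 2) / 2 with hc
  have hg0 := ball_pos hR hx
  have hv : HasFDerivAt
      (fun y : EuclideanSpace ℝ (Fin n) => R ^ c * (R ^ 2 - ‖y - x₀‖ ^ 2) ^ (-c))
      ((R ^ c) • (((-c) * (R ^ 2 - ‖x - x₀‖ ^ 2) ^ (-c - 1)) •
        ((-2 : ℝ) • (innerSL ℝ (x - x₀))))) x :=
    ((hasFDerivAt_g x₀ x R).rpow_const (Or.inl hg0.ne')).const_mul (R ^ c)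
  have hEq : (fun y => (R / (R ^ 2 - ‖y - x₀‖ ^ 2)) ^ c)
      =ᶠ[nhds x] (fun y : EuclideanSpace ℝ (Fin n) => R ^ c * (R ^ 2 - ‖y - x₀‖ ^ 2) ^ (-c)) := by
    filter_upwards [Metric.isOpen_ball.mem_nhds hx] with y hy
    have hgy := ball_pos hR hy
    rw [Real.div_rpow hR.le hgy.le, Real.rpow_neg hgy.le, div_eq_mul_inv]
  have := hv.congr_of_eventuallyEq hEq
  refine this.congr_fderiv ?_
  ext v
  simp only [ContinuousLinearMap.smul_apply, smul_eq_mul]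
  ring

lemma pgrad_eq (x₀ : EuclideanSpace ℝ (Fin n)) {R : ℝ} (hR : 0 < R)
    {x : EuclideanSpace ℝ (Fin n)} (hx : x ∈ Metric.ball x₀ R) (j : Fin n) :
    fderiv ℝ (fun y => (R / (R ^ 2 - ‖y - x₀‖ ^ 2)) ^ (((n : ℝ) - 2) / 2)) x
        (EuclideanSpace.single j 1)
      = (((n : ℝ) - 2) * R ^ (((n : ℝ) - 2) / 2)) *
          ((R ^ 2 - ‖x - x₀‖ ^ 2) ^ (-(((n : ℝ) - 2) / 2) - 1) * (x j - x₀ j)) := by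
  rw [(hasFDerivAt_u x₀ hR hx).fderiv]
  simp only [ContinuousLinearMap.smul_apply, smul_eq_mul, innerSL_apply_apply]
  rw [show (inner ℝ (x - x₀) (EuclideanSpace.single j 1) : ℝ) = x j - x₀ j by
    simp [EuclideanSpace.inner_single_right]]
  ring

lemma phess_eq (x₀ : EuclideanSpace ℝ (Fin n)) {R : ℝ} (hR : 0 < R)
    {x : EuclideanSpace ℝ (Fin n)} (hx : x ∈ Metric.ball x₀ R) (i j : Fin n) :
    fderiv ℝ (fun y => fderiv ℝ (fun z => (R / (R ^ 2 - ‖z - x₀‖ ^ 2)) ^ (((n : ℝ) - 2) / 2)) y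
        (EuclideanSpace.single j 1)) x (EuclideanSpace.single i 1)
      = (((n : ℝ) - 2) * R ^ (((n : ℝ) - 2) / 2)) *
          ((n : ℝ) * (R ^ 2 - ‖x - x₀‖ ^ 2) ^ (-(((n : ℝ) - 2) / 2) - 2)
            * (x i - x₀ i) * (x j - x₀ j)
          + (R ^ 2 - ‖x - x₀‖ ^ 2) ^ (-(((n : ℝ) - 2) / 2) - 1) *
            (if i = j then (1 : ℝ) else 0)) := by
  set c : ℝ := ((n : ℝ) - 2) / 2 with hc
  have hg0 := ball_pos hR hx
  have hEq : (fun y => fderiv ℝ (fun z => (R / (R ^ 2 - ‖z - x₀‖ ^ 2)) ^ c) y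
          (EuclideanSpace.single j 1))
      =ᶠ[nhds x] (fun y : EuclideanSpace ℝ (Fin n) =>
          (((n : ℝ) - 2) * R ^ c) * ((R ^ 2 - ‖y - x₀‖ ^ 2) ^ (-c - 1) * (y j - x₀ j))) := by
    filter_upwards [Metric.isOpen_ball.mem_nhds hx] with y hy
    exact pgrad_eq x₀ hR hy j
  rw [hEq.fderiv_eq]
  have h1 : HasFDerivAt
      (fun y : EuclideanSpace ℝ (Fin n) => (R ^ 2 - ‖y - x₀‖ ^ 2) ^ (-c - 1))
      (((-c - 1) * (R ^ 2 - ‖x - x₀‖ ^ 2) ^ (-c - 1 - 1)) •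
        ((-2 : ℝ) • (innerSL ℝ (x - x₀)))) x :=
    (hasFDerivAt_g x₀ x R).rpow_const (Or.inl hg0.ne')
  have h2 : HasFDerivAt (fun y : EuclideanSpace ℝ (Fin n) => y j - x₀ j)
      (EuclideanSpace.proj j : EuclideanSpace ℝ (Fin n) →L[ℝ] ℝ) x := by
    simpa using ((EuclideanSpace.proj j :
      EuclideanSpace ℝ (Fin n) →L[ℝ] ℝ).hasFDerivAt (x := x)).sub_const (x₀ j)
  have hw := (h1.mul h2).const_mul (((n : ℝ) - 2) * R ^ c)
  rw [(show HasFDerivAt (fun y : EuclideanSpace ℝ (Fin n) => ((n : ℝ) - 2) * R ^ c * ((R ^ 2 - ‖y - x₀‖ ^ 2) ^ (-c - 1) * (y j - x₀ j))) _ x from hw).fderiv]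
  simp only [ContinuousLinearMap.smul_apply, ContinuousLinearMap.add_apply, smul_eq_mul]
  rw [show ((innerSL ℝ) (x - x₀)) (EuclideanSpace.single i 1) = x i - x₀ i by
    simp [EuclideanSpace.inner_single_right]]
  rw [show (EuclideanSpace.proj j) (EuclideanSpace.single i (1:ℝ)) = if i = j then (1:ℝ) else 0 by
    simp [EuclideanSpace.single_apply, eq_comm]]
  have hexp : -c - 1 - 1 = -c - 2 := by ring
  rw [hexp]
  ring

end Aux

/-- for `u(x) = (R/(R² - |x-x₀|²))^{(n-2)/2}` on `B_R(x₀)`,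
`A^u ≡ -2 I` and the eigenvalues of `-A^u` are all equal to `2`. -/
theorem confHess_canonical_ball
    (n : ℕ) (hn : 3 ≤ n) (x₀ : EuclideanSpace ℝ (Fin n)) (R : ℝ) (hR : 0 < R) :
    ∀ x ∈ Metric.ball x₀ R,
      confHess n (fun y => (R / (R ^ 2 - ‖y - x₀‖ ^ 2)) ^ (((n : ℝ) - 2) / 2)) x
        = (-2 : ℝ) • (1 : Matrix (Fin n) (Fin n) ℝ)
      ∧ ∀ (h : (-(confHess n
            (fun y => (R / (R ^ 2 - ‖y - x₀‖ ^ 2)) ^ (((n : ℝ) - 2) / 2)) x)).IsHermitian),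
          h.eigenvalues = fun _ => 2 := by
  intro x hx
  have hg0 := ball_pos hR hx
  have hn3 : (3 : ℝ) ≤ (n : ℝ) := by exact_mod_cast hn
  have hn2 : ((n : ℝ) - 2) ≠ 0 := by linarith
  have hq0 : (0:ℝ) < (R ^ 2 - ‖x - x₀‖ ^ 2) ^ (((n:ℝ)+2)/2) := Real.rpow_pos_of_pos hg0 _
  have hrc0 : (0:ℝ) < R ^ (((n:ℝ)-2)/2) := Real.rpow_pos_of_pos hR _
  -- rpow algebra facts
  have ht1 : (R ^ 2 - ‖x - x₀‖ ^ 2) ^ (-(((n:ℝ)-2)/2) - 1)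
      = (R ^ 2 - ‖x - x₀‖ ^ 2) / ((R ^ 2 - ‖x - x₀‖ ^ 2) ^ (((n:ℝ)+2)/2)) := by
    rw [eq_div_iff hq0.ne', ← Real.rpow_add hg0,
      show -(((n:ℝ)-2)/2) - 1 + (((n:ℝ)+2)/2) = 1 by ring, Real.rpow_one]
  have ht2 : (R ^ 2 - ‖x - x₀‖ ^ 2) ^ (-(((n:ℝ)-2)/2) - 2)
      = 1 / ((R ^ 2 - ‖x - x₀‖ ^ 2) ^ (((n:ℝ)+2)/2)) := by
    rw [eq_div_iff hq0.ne', ← Real.rpow_add hg0,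
      show -(((n:ℝ)-2)/2) - 2 + (((n:ℝ)+2)/2) = 0 by ring, Real.rpow_zero]
  have hbase : (R / (R ^ 2 - ‖x - x₀‖ ^ 2)) ^ (((n:ℝ)-2)/2)
      = R ^ (((n:ℝ)-2)/2) * (R ^ 2 - ‖x - x₀‖ ^ 2) ^ (-(((n:ℝ)-2)/2)) := by
    rw [Real.div_rpow hR.le hg0.le, Real.rpow_neg hg0.le, div_eq_mul_inv]
  have hRneg : R ^ (-(((n:ℝ)+2)/2)) * (R ^ (((n:ℝ)-2)/2) * R ^ 2) = 1 := by
    rw [← Real.rpow_natCast R 2, ← Real.rpow_add hR, ← Real.rpow_add hR,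
      show -(((n:ℝ)+2)/2) + ((((n:ℝ)-2)/2) + ((2:ℕ):ℝ)) = 0 by push_cast; ring,
      Real.rpow_zero]
  have hA1 : ((R / (R ^ 2 - ‖x - x₀‖ ^ 2)) ^ (((n:ℝ)-2)/2)) ^ (-(((n : ℝ) + 2) / ((n : ℝ) - 2)))
      = ((R ^ 2 - ‖x - x₀‖ ^ 2) ^ (((n:ℝ)+2)/2)) / (R ^ (((n:ℝ)-2)/2) * R ^ 2) := by
    rw [hbase, Real.mul_rpow hrc0.le (Real.rpow_nonneg hg0.le _),
      ← Real.rpow_mul hR.le, ← Real.rpow_mul hg0.le,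
      show (((n:ℝ)-2)/2) * (-(((n:ℝ)+2)/((n:ℝ)-2))) = -(((n:ℝ)+2)/2) by field_simp,
      show (-(((n:ℝ)-2)/2)) * (-(((n:ℝ)+2)/((n:ℝ)-2))) = ((n:ℝ)+2)/2 by field_simp]
    rw [eq_div_iff (by positivity)]
    linear_combination ((R ^ 2 - ‖x - x₀‖ ^ 2) ^ (((n:ℝ)+2)/2)) * hRneg
  have hRn : R ^ (-(n:ℝ)) * (R ^ 2 * (R ^ (((n:ℝ)-2)/2)) ^ 2) = 1 := by
    rw [← Real.rpow_natCast (R ^ (((n:ℝ)-2)/2)) 2, ← Real.rpow_mul hR.le,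
      ← Real.rpow_natCast R 2, ← Real.rpow_add hR, ← Real.rpow_add hR,
      show -(n:ℝ) + (((2:ℕ):ℝ) + (((n:ℝ)-2)/2) * ((2:ℕ):ℝ)) = 0 by push_cast; ring,
      Real.rpow_zero]
  have hgn : (R ^ 2 - ‖x - x₀‖ ^ 2) ^ ((n:ℝ)) * (R ^ 2 - ‖x - x₀‖ ^ 2) ^ 2
      = ((R ^ 2 - ‖x - x₀‖ ^ 2) ^ (((n:ℝ)+2)/2)) ^ 2 := by
    rw [← Real.rpow_natCast ((R ^ 2 - ‖x - x₀‖ ^ 2) ^ (((n:ℝ)+2)/2)) 2,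
      ← Real.rpow_mul hg0.le,
      ← Real.rpow_natCast (R ^ 2 - ‖x - x₀‖ ^ 2) 2, ← Real.rpow_add hg0,
      show ((n:ℝ) + ((2:ℕ):ℝ)) = (((n:ℝ)+2)/2) * ((2:ℕ):ℝ) by push_cast; ring]
  have hA2 : ((R / (R ^ 2 - ‖x - x₀‖ ^ 2)) ^ (((n:ℝ)-2)/2)) ^ (-(2 * (n : ℝ) / ((n : ℝ) - 2)))
      = ((R ^ 2 - ‖x - x₀‖ ^ 2) ^ (((n:ℝ)+2)/2)) ^ 2
        / ((R ^ 2 - ‖x - x₀‖ ^ 2) ^ 2 * (R ^ 2 * (R ^ (((n:ℝ)-2)/2)) ^ 2)) := by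
    rw [hbase, Real.mul_rpow hrc0.le (Real.rpow_nonneg hg0.le _),
      ← Real.rpow_mul hR.le, ← Real.rpow_mul hg0.le,
      show (((n:ℝ)-2)/2) * (-(2 * (n:ℝ)/((n:ℝ)-2))) = -(n:ℝ) by field_simp,
      show (-(((n:ℝ)-2)/2)) * (-(2 * (n:ℝ)/((n:ℝ)-2))) = (n:ℝ) by field_simp]
    rw [eq_div_iff (by positivity)]
    linear_combination ((R ^ 2 - ‖x - x₀‖ ^ 2) ^ ((n:ℝ)) * (R ^ 2 - ‖x - x₀‖ ^ 2) ^ 2) * hRn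
      + hgn
  have hnrm : ‖x - x₀‖ ^ 2 = ∑ k, (x k - x₀ k) ^ 2 := by
    rw [EuclideanSpace.norm_eq, Real.sq_sqrt (by positivity)]
    refine Finset.sum_congr rfl fun k _ => ?_
    rw [show (x - x₀) k = x k - x₀ k from rfl, Real.norm_eq_abs, sq_abs]
  have hsum : (∑ k, (fderiv ℝ (fun y => (R / (R ^ 2 - ‖y - x₀‖ ^ 2)) ^ (((n : ℝ) - 2) / 2)) x
        (EuclideanSpace.single k 1)) ^ 2)
      = ((((n : ℝ) - 2) * R ^ (((n : ℝ) - 2) / 2)) *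
          (R ^ 2 - ‖x - x₀‖ ^ 2) ^ (-(((n : ℝ) - 2) / 2) - 1)) ^ 2 * ‖x - x₀‖ ^ 2 := by
    have hstep : (∑ k, (fderiv ℝ (fun y => (R / (R ^ 2 - ‖y - x₀‖ ^ 2)) ^ (((n : ℝ) - 2) / 2)) x
          (EuclideanSpace.single k 1)) ^ 2)
        = ((((n : ℝ) - 2) * R ^ (((n : ℝ) - 2) / 2)) *
            (R ^ 2 - ‖x - x₀‖ ^ 2) ^ (-(((n : ℝ) - 2) / 2) - 1)) ^ 2 * ∑ k, (x k - x₀ k) ^ 2 := by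
      rw [Finset.mul_sum]
      refine Finset.sum_congr rfl fun k _ => ?_
      rw [pgrad_eq x₀ hR hx k]; ring
    rw [hstep, ← hnrm]
  have hmat : confHess n (fun y => (R / (R ^ 2 - ‖y - x₀‖ ^ 2)) ^ (((n : ℝ) - 2) / 2)) x
      = (-2 : ℝ) • (1 : Matrix (Fin n) (Fin n) ℝ) := by
    ext i j
    simp only [confHess, phess, pgrad, Matrix.of_apply, Matrix.smul_apply, Matrix.one_apply,
      smul_eq_mul]
    rw [phess_eq x₀ hR hx i j, pgrad_eq x₀ hR hx i, pgrad_eq x₀ hR hx j, hsum,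
      hA1, hA2, ht1, ht2]
    rcases eq_or_ne i j with rfl | hij
    · simp only [eq_self_iff_true, if_true]
      field_simp
      ring
    · simp only [if_neg hij]
      field_simp
      ring
  refine ⟨hmat, fun h => ?_⟩
  funext i
  have hv := h.mulVec_eigenvectorBasis i
  have hA : -(confHess n (fun y => (R / (R ^ 2 - ‖y - x₀‖ ^ 2)) ^ (((n : ℝ) - 2) / 2)) x)
      = (2 : ℝ) • (1 : Matrix (Fin n) (Fin n) ℝ) := by
    rw [hmat, ← neg_smul]; norm_num
  have key : ∀ (w : Fin n → ℝ),
      (-(confHess n (fun y => (R / (R ^ 2 - ‖y - x₀‖ ^ 2)) ^ (((n : ℝ) - 2) / 2)) x)) *ᵥ w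
        = (2:ℝ) • w := by
    intro w
    rw [hA, Matrix.smul_mulVec, Matrix.one_mulVec]
  have heig := hv.symm.trans (key _)
  have hv0 : (h.eigenvectorBasis i) ≠ 0 := h.eigenvectorBasis.orthonormal.ne_zero i
  obtain ⟨k, hk⟩ : ∃ k, (WithLp.equiv 2 (Fin n → ℝ)) (h.eigenvectorBasis i) k ≠ 0 := by
    by_contra hcon
    push_neg at hcon
    exact hv0 (PiLp.ext hcon)
  have hk2 := congrFun heig k
  simp only [Pi.smul_apply, smul_eq_mul] at hk2
  exact mul_right_cancel₀ hk hk2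
end

section
/- Let n ≥ 3 and 1 ≤ k ≤ n-1. Write points of ℝⁿ as x = (x', x'') with x' ∈ ℝ^{n-k}, x'' ∈ ℝᵏ, and define u(x) = |x''|^{-(n-2)/2} on {x : x'' ≠ 0}. Then at every such point, -A^u equals (1/2) times a symmetric matrix whose eigenvalues, counted with multiplicity, are 1 with multiplicity n-k+1 and -1 with multiplicity k-1; i.e. λ(-A^u) = (1/2) v_k as multisets, where v_k = (1,…,1,-1,…,-1) with n-k+1 ones and k-1 minus-ones. -/
open Real Matrix Filter

lemma hasFDerivAt_sumSq {n : ℕ} (S : Finset (Fin n)) (x : EuclideanSpace ℝ (Fin n)) :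
    HasFDerivAt (fun y : EuclideanSpace ℝ (Fin n) => ∑ i ∈ S, (y i)^2)
      (∑ i ∈ S, (2 * x i) • EuclideanSpace.proj (𝕜 := ℝ) i) x := by
  apply HasFDerivAt.fun_sum
  intro i _
  have h : HasFDerivAt (fun y : EuclideanSpace ℝ (Fin n) => y i)
      (EuclideanSpace.proj (𝕜 := ℝ) i) x := (EuclideanSpace.proj (𝕜 := ℝ) i).hasFDerivAt
  have h2 := h.mul h
  have hf : (fun y : EuclideanSpace ℝ (Fin n) => y i * y i) = fun y => (y i)^2 := by
    funext y; ring
  simp only [Pi.mul_def] at h2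
  rw [hf] at h2
  rw [two_mul, add_smul]
  exact h2

lemma proj_single {n : ℕ} (i j : Fin n) :
    EuclideanSpace.proj (𝕜 := ℝ) j (EuclideanSpace.single i (1:ℝ)) = if j = i then 1 else 0 := by
  simp [EuclideanSpace.single_apply]

lemma sumDeriv_apply {n : ℕ} (S : Finset (Fin n)) (x : EuclideanSpace ℝ (Fin n)) (i : Fin n) :
    (∑ j ∈ S, (2 * x j) • EuclideanSpace.proj (𝕜 := ℝ) j) (EuclideanSpace.single i (1:ℝ))
      = if i ∈ S then 2 * x i else 0 := by
  simp only [ContinuousLinearMap.coe_sum', Finset.sum_apply, ContinuousLinearMap.coe_smul',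
    Pi.smul_apply, proj_single, smul_eq_mul]
  simp [Finset.sum_ite_eq' S i (fun j => 2 * x j), mul_ite]

section EF
variable {n : ℕ} (S : Finset (Fin n))

-- the rpow version of u and its first derivative data
lemma pgrad_formula (q : ℝ) (x : EuclideanSpace ℝ (Fin n))
    (hx : (0:ℝ) < ∑ i ∈ S, (x i)^2) (l : Fin n) :
    pgrad n (fun y => (∑ i ∈ S, (y i)^2) ^ q) x l
      = q * (∑ i ∈ S, (x i)^2) ^ (q - 1) * (if l ∈ S then 2 * x l else 0) := by
  have h := (hasFDerivAt_sumSq S x).rpow_const (p := q) (Or.inl hx.ne')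
  rw [pgrad, h.fderiv, ContinuousLinearMap.coe_smul', Pi.smul_apply, sumDeriv_apply,
    smul_eq_mul]

lemma fderiv_eventually (q : ℝ) (x : EuclideanSpace ℝ (Fin n))
    (hx : (0:ℝ) < ∑ i ∈ S, (x i)^2) (j : Fin n) :
    (fun y => fderiv ℝ (fun y => (∑ i ∈ S, (y i)^2) ^ q) y (EuclideanSpace.single j 1))
      =ᶠ[nhds x]
      (fun y => q * (∑ i ∈ S, (y i)^2) ^ (q - 1) * (if j ∈ S then 2 * y j else 0)) := by
  have hcont : Continuous (fun y : EuclideanSpace ℝ (Fin n) => ∑ i ∈ S, (y i)^2) := by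
    apply continuous_finset_sum
    intro i _
    exact ((EuclideanSpace.proj (𝕜 := ℝ) i).continuous).pow 2
  have hopen : IsOpen {y : EuclideanSpace ℝ (Fin n) | 0 < ∑ i ∈ S, (y i)^2} :=
    isOpen_lt continuous_const hcont
  apply Filter.eventuallyEq_of_mem (hopen.mem_nhds hx)
  intro y hy
  have h := (hasFDerivAt_sumSq S y).rpow_const (p := q) (Or.inl (ne_of_gt hy))
  dsimp only
  rw [h.fderiv, ContinuousLinearMap.coe_smul', Pi.smul_apply, sumDeriv_apply, smul_eq_mul]

lemma phess_formula (q : ℝ) (x : EuclideanSpace ℝ (Fin n))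
    (hx : (0:ℝ) < ∑ i ∈ S, (x i)^2) (i j : Fin n) :
    phess n (fun y => (∑ i ∈ S, (y i)^2) ^ q) x i j
      = q * (q-1) * (∑ i ∈ S, (x i)^2) ^ (q - 1 - 1)
          * (if i ∈ S then 2 * x i else 0) * (if j ∈ S then 2 * x j else 0)
        + q * (∑ i ∈ S, (x i)^2) ^ (q - 1)
          * (if j ∈ S then (if i = j then 2 else 0) else 0) := by
  rw [phess, (fderiv_eventually S q x hx j).fderiv_eq]
  by_cases hj : j ∈ S
  · simp only [hj, if_true]
    have h1 : HasFDerivAt (fun y : EuclideanSpace ℝ (Fin n) => (∑ i ∈ S, (y i)^2) ^ (q-1))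
        (((q-1) * (∑ i ∈ S, (x i)^2) ^ (q-1-1)) • (∑ i ∈ S, (2 * x i) • EuclideanSpace.proj (𝕜 := ℝ) i)) x :=
      (hasFDerivAt_sumSq S x).rpow_const (Or.inl hx.ne')
    have h2 : HasFDerivAt (fun y : EuclideanSpace ℝ (Fin n) => 2 * y j)
        ((2:ℝ) • EuclideanSpace.proj (𝕜 := ℝ) j) x :=
      ((EuclideanSpace.proj (𝕜 := ℝ) j).hasFDerivAt).const_mul 2
    have h3 := (h1.mul h2).const_mul q
    have hfun : (fun y : EuclideanSpace ℝ (Fin n) =>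
        q * ((∑ i ∈ S, (y i)^2) ^ (q-1) * (2 * y j)))
        = fun y => q * (∑ i ∈ S, (y i)^2) ^ (q-1) * (2 * y j) := by
      funext y; ring
    simp only [Pi.mul_apply] at h3
    rw [hfun] at h3
    rw [h3.fderiv]
    simp only [ContinuousLinearMap.coe_smul', Pi.smul_apply, ContinuousLinearMap.add_apply,
      sumDeriv_apply, proj_single, smul_eq_mul]
    by_cases hij : i = j
    · subst hij; simp only [hj, if_true, if_pos rfl]; ring
    · have : ¬ (j = i) := fun h => hij h.symm
      simp only [hij, this, if_false]
      by_cases hi : i ∈ S <;> simp [hi] <;> ring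
  · simp only [hj, if_false, mul_zero]
    simp
end EF

set_option maxHeartbeats 2000000 in
lemma entry_formula {n : ℕ} (hn : 3 ≤ n) (S : Finset (Fin n))
    (x : EuclideanSpace ℝ (Fin n)) (hx : (0:ℝ) < ∑ i ∈ S, (x i)^2) (i j : Fin n) :
    (-(confHess n (fun y => (Real.sqrt (∑ i ∈ S, (y i)^2)) ^ (-(((n:ℝ)-2)/2))) x)) i j
      = (if i = j then (if i ∈ S then -(2⁻¹:ℝ) else 2⁻¹) else 0)
        + (if i ∈ S then x i else 0) * (if j ∈ S then x j else 0) * (∑ i ∈ S, (x i)^2)⁻¹ := by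
  have hn3 : (3:ℝ) ≤ (n:ℝ) := by exact_mod_cast hn
  have hm2 : (n:ℝ) - 2 ≠ 0 := by linarith
  set q : ℝ := -(((n:ℝ) - 2)/4) with hq
  have hgnn : ∀ y : EuclideanSpace ℝ (Fin n), (0:ℝ) ≤ ∑ i ∈ S, (y i)^2 :=
    fun y => Finset.sum_nonneg fun i _ => sq_nonneg _
  have hu : (fun y : EuclideanSpace ℝ (Fin n) =>
      (Real.sqrt (∑ i ∈ S, (y i)^2)) ^ (-(((n:ℝ)-2)/2)))
      = fun y => (∑ i ∈ S, (y i)^2) ^ q := by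
    funext y
    rw [Real.sqrt_eq_rpow, ← Real.rpow_mul (hgnn y)]
    congr 1
    rw [hq]; ring
  rw [hu]
  set r := ∑ i ∈ S, (x i)^2 with hr0
  have hr : 0 < r := hx
  have hrne : r ≠ 0 := ne_of_gt hr
  have hrinv : r⁻¹ = r ^ (-1:ℝ) := by
    rw [← Real.rpow_neg_one]
  set A := r ^ (((n:ℝ)+2)/4) with hA0
  have hApos : 0 < A := Real.rpow_pos_of_pos hr _
  have hAne : A ≠ 0 := ne_of_gt hApos
  have hpow2 : ∀ a : ℝ, (r ^ a) ^ (2:ℕ) = r ^ (a * 2) := by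
    intro a
    rw [← Real.rpow_natCast (r ^ a) 2, ← Real.rpow_mul hr.le]
    norm_num
  have e1 : (r ^ q) ^ (-(((n:ℝ)+2)/((n:ℝ)-2))) = A := by
    rw [← Real.rpow_mul hr.le, hA0]
    congr 1; rw [hq]; field_simp
  have e2 : (r ^ q) ^ (-(2*(n:ℝ)/((n:ℝ)-2))) = A^2 * r⁻¹ := by
    rw [← Real.rpow_mul hr.le, hA0, hpow2, hrinv, ← Real.rpow_add hr]
    congr 1; rw [hq]; field_simp; ring
  have e3 : r ^ (q - 1) = A⁻¹ := by
    rw [hA0, ← Real.rpow_neg hr.le]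
    congr 1; rw [hq]; ring
  have e4 : r ^ (q - 1 - 1) = A⁻¹ * r⁻¹ := by
    rw [hA0, ← Real.rpow_neg hr.le, hrinv, ← Real.rpow_add hr]
    congr 1; rw [hq]; ring
  have hsumsq : ∑ l, (pgrad n (fun y => (∑ i ∈ S, (y i)^2) ^ q) x l)^2
      = 4 * q^2 * (A⁻¹)^2 * r := by
    have h1 : ∀ l, (pgrad n (fun y => (∑ i ∈ S, (y i)^2) ^ q) x l)^2
        = 4 * q^2 * (A⁻¹)^2 * (if l ∈ S then (x l)^2 else 0) := by
      intro l
      rw [pgrad_formula S q x hx l, ← hr0, e3]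
      split_ifs <;> ring
    rw [Finset.sum_congr rfl (fun l _ => h1 l), ← Finset.mul_sum, Finset.sum_ite_mem,
      Finset.univ_inter, ← hr0]
  simp only [Matrix.neg_apply, confHess, Matrix.of_apply]
  rw [phess_formula S q x hx i j, pgrad_formula S q x hx i, pgrad_formula S q x hx j, hsumsq]
  rw [← hr0, e1, e2, e3, e4]
  by_cases hij : i = j
  · subst hij
    by_cases hi : i ∈ S
    · simp only [hi, if_true, if_false, if_pos rfl]
      clear_value r A
      rw [hq]
      field_simp
      ring
    · simp only [hi, if_false, if_pos rfl, if_true]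
      clear_value r A
      rw [hq]
      field_simp
      ring
  · have hji : ¬ (j = i) := fun h => hij h.symm
    by_cases hi : i ∈ S <;> by_cases hj : j ∈ S
    · clear_value r A
      simp only [if_pos hi, if_pos hj, if_neg hij]
      rw [hq]
      field_simp
      ring
    · clear_value r A
      simp only [if_pos hi, if_neg hj, if_neg hij]
      ring
    · clear_value r A
      simp only [if_neg hi, if_pos hj, if_neg hij]
      ring
    · clear_value r A
      simp only [if_neg hi, if_neg hj, if_neg hij]
      ring
lemma my_eval_charpoly {N : ℕ} (M : Matrix (Fin N) (Fin N) ℝ) (t : ℝ) :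
    M.charpoly.eval t = (Matrix.of fun i j => (if i = j then t else 0) - M i j).det := by
  rw [Matrix.charpoly, ← Polynomial.coe_evalRingHom, RingHom.map_det]
  congr 1
  ext i j
  by_cases h : i = j
  · subst h; simp [Matrix.charmatrix_apply_eq]
  · simp [Matrix.charmatrix_apply_ne _ _ _ h, h]

lemma card_filter_val_lt (n m : ℕ) (h : m ≤ n) :
    (Finset.univ.filter (fun i : Fin n => (i : ℕ) < m)).card = m := by
  have key : (Finset.univ.filter (fun i : Fin n => (i : ℕ) < m)).map Fin.valEmbedding
      = Finset.range m := by
    ext a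
    simp only [Finset.mem_map, Finset.mem_filter, Finset.mem_univ, true_and,
      Fin.valEmbedding_apply, Finset.mem_range]
    constructor
    · rintro ⟨i, hi, rfl⟩; exact hi
    · intro ha; exact ⟨⟨a, lt_of_lt_of_le ha h⟩, ha, rfl⟩
  have := congrArg Finset.card key
  rwa [Finset.card_map, Finset.card_range] at this

lemma card_filter_le_val (n m : ℕ) (h : m ≤ n) :
    (Finset.univ.filter (fun i : Fin n => m ≤ (i : ℕ))).card = n - m := by
  have h1 := Finset.card_filter_add_card_filter_not
    (s := (Finset.univ : Finset (Fin n))) (p := fun i : Fin n => (i : ℕ) < m)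
  have h2 : (Finset.univ.filter (fun i : Fin n => ¬ (i : ℕ) < m))
      = Finset.univ.filter (fun i : Fin n => m ≤ (i : ℕ)) := by
    apply Finset.filter_congr; intro i _; simp [not_lt]
  rw [card_filter_val_lt n m h, h2, Finset.card_univ, Fintype.card_fin] at h1
  omega
lemma det_step {N : ℕ} (S : Finset (Fin N)) (x : EuclideanSpace ℝ (Fin N)) (r t : ℝ)
    (hr : 0 < r) (hsum : ∑ i ∈ S, (x i)^2 = r) (ht : 1 < t) (hS : 1 ≤ S.card) :
    (Matrix.of fun i j => (if i = j then t else 0) -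
        ((if i = j then (if i ∈ S then -(2⁻¹:ℝ) else 2⁻¹) else 0)
          + (if i ∈ S then x i else 0) * (if j ∈ S then x j else 0) * r⁻¹)).det
      = (t - 2⁻¹) ^ (N - S.card + 1) * (t + 2⁻¹) ^ (S.card - 1) := by
  have htp : t + 2⁻¹ ≠ 0 := by linarith
  have htm : t - 2⁻¹ ≠ 0 := by linarith
  set d : Fin N → ℝ := fun i => if i ∈ S then -(2⁻¹:ℝ) else 2⁻¹ with hd
  set w : Fin N → ℝ := fun i => if i ∈ S then x i else 0 with hw
  have hdne : ∀ i, t - d i ≠ 0 := by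
    intro i; rw [hd]; dsimp only; split <;> [linarith; linarith]
  have hM : (Matrix.of fun i j => (if i = j then t else 0) -
        ((if i = j then (if i ∈ S then -(2⁻¹:ℝ) else 2⁻¹) else 0)
          + (if i ∈ S then x i else 0) * (if j ∈ S then x j else 0) * r⁻¹))
      = Matrix.diagonal (fun i => t - d i)
        + Matrix.replicateCol Unit (fun i => -(w i) * r⁻¹) * Matrix.replicateRow Unit w := by
    ext i j
    by_cases h : i = j <;>
      · simp only [Matrix.of_apply, Matrix.add_apply, Matrix.diagonal, Matrix.mul_apply,
          Matrix.replicateCol_apply, Matrix.replicateRow_apply, h, hd, hw, Matrix.of_apply,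
          Finset.univ_unique, Finset.sum_singleton]
        split_ifs <;> ring
  have hA : IsUnit (Matrix.diagonal (fun i => t - d i)).det := by
    rw [Matrix.det_diagonal]
    exact (Finset.prod_ne_zero_iff.2 fun i _ => hdne i).isUnit
  have hAinv : (Matrix.diagonal (fun i => t - d i))⁻¹
      = Matrix.diagonal (fun i => (t - d i)⁻¹) := by
    apply Matrix.inv_eq_right_inv
    rw [Matrix.diagonal_mul_diagonal]
    ext i j
    by_cases h : i = j <;>
      simp [h, Matrix.diagonal_apply, mul_inv_cancel₀ (hdne _), Matrix.one_apply]
  rw [hM, Matrix.det_add_replicateCol_mul_replicateRow hA, hAinv, Matrix.det_diagonal]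
  rw [Matrix.det_unique]
  have hentry : ((1 + Matrix.replicateRow Unit w * Matrix.diagonal (fun i => (t - d i)⁻¹)
      * Matrix.replicateCol Unit (fun i => -(w i) * r⁻¹) : Matrix Unit Unit ℝ)) default default
      = 1 - (t + 2⁻¹)⁻¹ := by
    simp only [Matrix.add_apply, Matrix.one_apply_eq, Matrix.mul_apply, Matrix.replicateRow_apply,
      Matrix.replicateCol_apply, Matrix.diagonal_apply, Finset.univ_unique, Finset.sum_singleton]
    congr 1
    have step1 : ∀ j : Fin N, (∑ l, w l * if l = j then (t - d l)⁻¹ else 0) * (-(w j) * r⁻¹)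
        = (if j ∈ S then -((x j)^2 * ((t + 2⁻¹)⁻¹ * r⁻¹)) else 0) := by
      intro j
      rw [Finset.sum_eq_single j]
      · rw [if_pos rfl, hd, hw]; dsimp only
        split_ifs with hjS
        · rw [sub_neg_eq_add]; ring
        · ring
      · intro l _ hl; rw [if_neg hl, mul_zero]
      · intro h; exact absurd (Finset.mem_univ j) h
    rw [Finset.sum_congr rfl (fun j _ => step1 j)]
    rw [Finset.sum_ite_mem, Finset.univ_inter]
    have : ∑ j ∈ S, -((x j)^2 * ((t + 2⁻¹)⁻¹ * r⁻¹))
        = -((∑ j ∈ S, (x j)^2) * ((t + 2⁻¹)⁻¹ * r⁻¹)) := by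
      rw [Finset.sum_neg_distrib, ← Finset.sum_mul]
    rw [this, hsum]
    field_simp
  rw [hentry]
  have hprod : (∏ i, (t - d i)) = (t + 2⁻¹) ^ S.card * (t - 2⁻¹) ^ (N - S.card) := by
    have : ∀ i : Fin N, t - d i = if i ∈ S then t + 2⁻¹ else t - 2⁻¹ := by
      intro i; rw [hd]; dsimp only; split_ifs <;> ring
    rw [Finset.prod_congr rfl (fun i _ => this i), Finset.prod_ite]
    rw [Finset.prod_const, Finset.prod_const]
    congr 2
    · simp [Finset.filter_univ_mem]
    · rw [Finset.filter_not, Finset.filter_univ_mem, Finset.card_univ_diff, Fintype.card_fin]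
  rw [hprod]
  obtain ⟨k', hk'⟩ : ∃ k', S.card = k' + 1 := ⟨S.card - 1, by omega⟩
  rw [hk']
  simp only [Nat.add_sub_cancel]
  rw [pow_succ, pow_succ]
  field_simp
  ring

lemma prod_ite_val_lt (n m : ℕ) (hm : m ≤ n) (a b : ℝ) :
    (∏ i : Fin n, (if (i:ℕ) < m then a else b)) = a ^ m * b ^ (n - m) := by
  rw [Finset.prod_ite, Finset.prod_const, Finset.prod_const]
  have h2 := Finset.card_filter_add_card_filter_not
    (s := (Finset.univ : Finset (Fin n))) (p := fun i : Fin n => (i : ℕ) < m)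
  rw [Finset.card_univ, Fintype.card_fin] at h2
  rw [card_filter_val_lt n m hm]
  congr 2
  rw [card_filter_val_lt n m hm] at h2
  omega

/-- for `u(x) = |x''|^{-(n-2)/2}` on `{x'' ≠ 0}` (where `x''` consists of the
last `k` coordinates), the eigenvalues of `-A^u` are, as a multiset (encoded via the
characteristic polynomial), `1/2` with multiplicity `n-k+1` and `-1/2` with multiplicity
`k-1`, i.e. `λ(-A^u) = (1/2) v_k`. -/
theorem eigenvalues_model_metric
    (n k : ℕ) (hn : 3 ≤ n) (hk1 : 1 ≤ k) (hkn : k ≤ n - 1) :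
    ∀ x : EuclideanSpace ℝ (Fin n),
      0 < ∑ i ∈ Finset.univ.filter (fun i : Fin n => n - k ≤ (i : ℕ)), (x i) ^ 2 →
      (-(confHess n
          (fun y => (Real.sqrt (∑ i ∈ Finset.univ.filter (fun i : Fin n => n - k ≤ (i : ℕ)),
              (y i) ^ 2)) ^ (-(((n : ℝ) - 2) / 2))) x)).charpoly
        = (Matrix.diagonal (fun i : Fin n =>
            if (i : ℕ) < n - k + 1 then (1 : ℝ) / 2 else -(1 / 2))).charpoly := by
  intro x hx
  set S := Finset.univ.filter (fun i : Fin n => n - k ≤ (i : ℕ)) with hS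
  have hcardS : S.card = k := by
    rw [hS, card_filter_le_val n (n - k) (by omega)]
    omega
  have hk1' : 1 ≤ S.card := by omega
  have hr : 0 < ∑ i ∈ S, (x i)^2 := hx
  apply Polynomial.eq_of_infinite_eval_eq
  apply Set.Infinite.mono (s := Set.Ioi (1:ℝ)) ?_ (Set.Ioi_infinite 1)
  intro t ht
  have ht1 : (1:ℝ) < t := ht
  simp only [Set.mem_setOf_eq]
  rw [my_eval_charpoly, my_eval_charpoly]
  have hL : (Matrix.of fun i j => (if i = j then t else 0)
        - (-(confHess n (fun y => (Real.sqrt (∑ i ∈ S, (y i)^2)) ^ (-(((n:ℝ)-2)/2))) x)) i j)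
      = (Matrix.of fun i j => (if i = j then t else 0) -
        ((if i = j then (if i ∈ S then -(2⁻¹:ℝ) else 2⁻¹) else 0)
          + (if i ∈ S then x i else 0) * (if j ∈ S then x j else 0)
            * (∑ i ∈ S, (x i)^2)⁻¹)) := by
    ext i j
    rw [Matrix.of_apply, Matrix.of_apply, entry_formula hn S x hr i j]
  rw [hL, det_step S x _ t hr rfl ht1 hk1', hcardS]
  have hR : (Matrix.of fun i j => (if i = j then t else 0)
        - (Matrix.diagonal (fun i : Fin n =>
            if (i : ℕ) < n - k + 1 then (1:ℝ)/2 else -(1/2))) i j)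
      = Matrix.diagonal (fun i : Fin n =>
          t - (if (i : ℕ) < n - k + 1 then (1:ℝ)/2 else -(1/2))) := by
    ext i j
    by_cases h : i = j
    · subst h; simp [Matrix.diagonal_apply]
    · simp [Matrix.diagonal_apply, h]
  rw [hR, Matrix.det_diagonal]
  have hstep : ∀ i : Fin n, t - (if (i : ℕ) < n - k + 1 then (1:ℝ)/2 else -(1/2))
      = (if (i : ℕ) < n - k + 1 then t - 2⁻¹ else t + 2⁻¹) := by
    intro i; split_ifs <;> ring
  rw [Finset.prod_congr rfl (fun i _ => hstep i), prod_ite_val_lt n (n - k + 1) (by omega)]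
  have h1 : n - (n - k + 1) = k - 1 := by omega
  rw [h1]
end
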